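/- For all t₀ ≤ t, the reachable-set operator maps the attractor fibre at time t₀ exactly onto the attractor fibre at time t: Φ t t₀ (A t₀) = A t. In other words, the nonautonomous set (A t)_{t ∈ ℝ} is invariant for the set-valued evolution operator of the linear differential inclusion x' ∈ closedBall (L(t)x) ρ. -/

import Mathlib

open MeasureTheory Set Metric Pointwise
open scoped RealInnerProductSpace

noncomputable section

abbrev Euc (d : ℕ) : Type := EuclideanSpace ℝ (Fin d)

/-- The set of admissible controls: measurable functions with values in the closed unit ball. -/
def ctrlSet (d : ℕ) : Set (ℝ → Euc d) :=
  {ξ | Measurable ξ ∧ ∀ s, ‖ξ s‖ ≤ 1}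

/-- The attractor fibre at time `t`. -/
def Afib (d : ℕ) (Ψ : ℝ → ℝ → (Euc d →L[ℝ] Euc d)) (ρ t : ℝ) : Set (Euc d) :=
  {x | ∃ ξ ∈ ctrlSet d, x = ρ • ∫ s in Set.Iic t, Ψ t s (ξ s)}

/-- The reachable-set operator of the linear differential inclusion. -/
def reach (d : ℕ) (Ψ : ℝ → ℝ → (Euc d →L[ℝ] Euc d)) (ρ t t₀ : ℝ) (S : Set (Euc d)) :
    Set (Euc d) :=
  {y | ∃ x₀ ∈ S, ∃ ξ ∈ ctrlSet d, y = Ψ t t₀ x₀ + ρ • ∫ s in Set.Icc t₀ t, Ψ t s (ξ s)}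

lemma expMulIntegrableOnIic {b : ℝ} (hb : 0 < b) (c : ℝ) :
    IntegrableOn (fun s => Real.exp (b * s)) (Set.Iic c) := by
  have h : IntegrableOn (fun x => Real.exp (-b * x)) (Ioi (-c)) :=
    exp_neg_integrableOn_Ioi (-c) hb
  have h2 : Integrable ((Set.Ioi (-c)).indicator fun x => Real.exp (-b * x)) :=
    (integrable_indicator_iff measurableSet_Ioi).2 h
  have h3 := h2.comp_neg
  have heq : (fun t => ((Set.Ioi (-c)).indicator fun x => Real.exp (-b * x)) (-t))
      = (Set.Iio c).indicator fun s => Real.exp (b * s) := by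
    funext s
    simp only [Set.indicator_apply, Set.mem_Ioi, Set.mem_Iio, neg_lt_neg_iff, neg_mul_neg]
  rw [heq] at h3
  have h4 : IntegrableOn (fun s => Real.exp (b * s)) (Set.Iio c) :=
    (integrable_indicator_iff measurableSet_Iio).1 h3
  exact h4.congr_set_ae Iio_ae_eq_Iic.symm

/-- Invariance of the attractor for the set-valued evolution operator. -/
theorem attractor_invariant
    (d : ℕ) (hd : 1 ≤ d)
    (L : ℝ → (Euc d →L[ℝ] Euc d)) (hL : Continuous L)
    (Ψ : ℝ → ℝ → (Euc d →L[ℝ] Euc d))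
    (hΨc : Continuous fun p : ℝ × ℝ => Ψ p.1 p.2)
    (hΨid : ∀ t : ℝ, Ψ t t = ContinuousLinearMap.id ℝ (Euc d))
    (hΨcoc : ∀ t s r : ℝ, (Ψ t s).comp (Ψ s r) = Ψ t r)
    (hΨd : ∀ (s : ℝ) (x : Euc d) (t : ℝ), HasDerivAt (fun τ => Ψ τ s x) (L t (Ψ t s x)) t)
    (K γ : ℝ) (hK : 1 ≤ K) (hγ : 0 < γ)
    (hstab : ∀ s t : ℝ, s ≤ t → ‖Ψ t s‖ ≤ K * Real.exp (-γ * (t - s)))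
    (ρ : ℝ) (hρ : 0 < ρ) :
    ∀ t₀ t : ℝ, t₀ ≤ t → reach d Ψ ρ t t₀ (Afib d Ψ ρ t₀) = Afib d Ψ ρ t := by
  intro t₀ t ht
  -- measurability of integrands
  have hmeas : ∀ (t' : ℝ) (ζ : ℝ → Euc d), Measurable ζ →
      Measurable fun s => Ψ t' s (ζ s) := by
    intro t' ζ hζ
    have h1 : Measurable fun s => Ψ t' s :=
      (hΨc.comp (continuous_const.prodMk continuous_id)).measurable
    exact isBoundedBilinearMap_apply.continuous.measurable.comp (h1.prodMk hζ)
  -- integrability on Iic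
  have hintIic : ∀ (t' r : ℝ), r ≤ t' → ∀ ζ ∈ ctrlSet d,
      IntegrableOn (fun s => Ψ t' s (ζ s)) (Set.Iic r) := by
    intro t' r hr ζ hζ
    refine Integrable.mono' (g := fun s => (K * Real.exp (-γ * t')) * Real.exp (γ * s)) ?_ 
      ((hmeas t' ζ hζ.1).aestronglyMeasurable) ?_
    · exact ((expMulIntegrableOnIic hγ r).const_mul _)
    · filter_upwards [ae_restrict_mem measurableSet_Iic] with s hs
      calc ‖Ψ t' s (ζ s)‖ ≤ ‖Ψ t' s‖ * ‖ζ s‖ := (Ψ t' s).le_opNorm _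
        _ ≤ ‖Ψ t' s‖ * 1 := by
            have := (Ψ t' s).opNorm_nonneg
            exact mul_le_mul_of_nonneg_left (hζ.2 s) this
        _ ≤ K * Real.exp (-γ * (t' - s)) := by
            rw [mul_one]; exact hstab s t' (le_trans hs hr)
        _ = (K * Real.exp (-γ * t')) * Real.exp (γ * s) := by
            rw [mul_assoc, ← Real.exp_add]; ring_nf
  -- integrability on Icc
  have hintIcc : ∀ ζ ∈ ctrlSet d,
      IntegrableOn (fun s => Ψ t s (ζ s)) (Set.Icc t₀ t) := by
    intro ζ hζ
    refine Integrable.mono' (g := fun _ => K) (integrableOn_const ?_)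
      ((hmeas t ζ hζ.1).aestronglyMeasurable) ?_
    · exact measure_Icc_lt_top.ne
    · filter_upwards [ae_restrict_mem measurableSet_Icc] with s hs
      calc ‖Ψ t s (ζ s)‖ ≤ ‖Ψ t s‖ * ‖ζ s‖ := (Ψ t s).le_opNorm _
        _ ≤ ‖Ψ t s‖ * 1 := mul_le_mul_of_nonneg_left (hζ.2 s) (Ψ t s).opNorm_nonneg
        _ ≤ K * Real.exp (-γ * (t - s)) := by rw [mul_one]; exact hstab s t hs.2
        _ ≤ K * 1 := by
            refine mul_le_mul_of_nonneg_left ?_ (le_trans zero_le_one hK)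
            rw [Real.exp_le_one_iff]
            nlinarith [hs.2]
        _ = K := mul_one K
  -- the key identity
  have key : ∀ ζ ∈ ctrlSet d,
      ρ • ∫ s in Set.Iic t, Ψ t s (ζ s)
        = Ψ t t₀ (ρ • ∫ s in Set.Iic t₀, Ψ t₀ s (ζ s))
          + ρ • ∫ s in Set.Icc t₀ t, Ψ t s (ζ s) := by
    intro ζ hζ
    have h1 : Ψ t t₀ (ρ • ∫ s in Set.Iic t₀, Ψ t₀ s (ζ s))
        = ρ • ∫ s in Set.Iic t₀, Ψ t s (ζ s) := by
      rw [(Ψ t t₀).map_smul, ← ContinuousLinearMap.integral_comp_comm _ (hintIic t₀ t₀ le_rfl ζ hζ)]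
      congr 1
      refine setIntegral_congr_fun measurableSet_Iic fun s _ => ?_
      rw [← hΨcoc t t₀ s]; rfl
    have h2 : (∫ s in Set.Iic t, Ψ t s (ζ s))
        = (∫ s in Set.Iic t₀, Ψ t s (ζ s)) + ∫ s in Set.Ioc t₀ t, Ψ t s (ζ s) := by
      rw [← setIntegral_union (Iic_disjoint_Ioc le_rfl) measurableSet_Ioc
        (hintIic t t₀ ht ζ hζ) ((hintIcc ζ hζ).mono_set Ioc_subset_Icc_self),
        Iic_union_Ioc_eq_Iic ht]
    rw [h1, h2, smul_add, integral_Icc_eq_integral_Ioc]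
  ext y
  constructor
  · rintro ⟨x₀, ⟨ξ, hξ, rfl⟩, η, hη, rfl⟩
    set ζ : ℝ → Euc d := fun s => if s ≤ t₀ then ξ s else η s with hζdef
    have hζ : ζ ∈ ctrlSet d := by
      constructor
      · exact Measurable.ite measurableSet_Iic hξ.1 hη.1
      · intro s; by_cases h : s ≤ t₀ <;> simp only [hζdef, h, if_true, if_false]
        exacts [hξ.2 s, hη.2 s]
    refine ⟨ζ, hζ, ?_⟩
    rw [key ζ hζ]
    congr 2
    · congr 1
      refine setIntegral_congr_fun measurableSet_Iic fun s hs => ?_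
      simp only [hζdef, if_pos (mem_Iic.mp hs)]
    · rw [integral_Icc_eq_integral_Ioc, integral_Icc_eq_integral_Ioc]
      refine setIntegral_congr_fun measurableSet_Ioc fun s hs => ?_
      simp only [hζdef, if_neg (not_le.mpr hs.1)]
  · rintro ⟨ζ, hζ, rfl⟩
    exact ⟨ρ • ∫ s in Set.Iic t₀, Ψ t₀ s (ζ s), ⟨ζ, hζ, rfl⟩, ζ, hζ, key ζ hζ⟩
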